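/- Lagrange interpolation lemma: let A and B be finite sets of distinct complex numbers with |A| = m and |B| = n, with the elements of A pairwise distinct. For any integer r ≥ 0, Σ_{a∈A} a^r · ∏_{b∈B}(a−b) / ∏_{c∈A, c≠a}(a−c) = h_{n−m+r+1}(A−B), where h_k(A−B) is the coefficient of z^k in ∏_{b∈B}(1−zb)/∏_{a∈A}(1−za) (and h_k = 0 for k < 0). -/

import Mathlib

open PowerSeries

/-- The generating series `H_z(A-B) = ∏_{b∈B}(1-zb) / ∏_{a∈A}(1-za)` as a formal
power series. -/
noncomputable def diffSeries (A B : Finset ℂ) : PowerSeries ℂ :=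
  (∏ b ∈ B, (1 - PowerSeries.C b * PowerSeries.X)) *
    (∏ a ∈ A, (1 - PowerSeries.C a * PowerSeries.X))⁻¹

/-- `h_k(A-B)` for an integer index `k`, zero for `k < 0`. -/
noncomputable def hDiff (A B : Finset ℂ) (k : ℤ) : ℂ :=
  if 0 ≤ k then PowerSeries.coeff k.toNat (diffSeries A B) else 0


noncomputable def Pser (A : Finset ℂ) : PowerSeries ℂ :=
  ∏ a ∈ A, (1 - PowerSeries.C a * PowerSeries.X)

lemma constCoeff_Pser (A : Finset ℂ) : constantCoeff (Pser A) = 1 := by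
  simp [Pser]

lemma Pser_ne_zero (A : Finset ℂ) : Pser A ≠ 0 := by
  intro h
  have := constCoeff_Pser A
  rw [h] at this
  simp at this

lemma Pser_mul_inv (A : Finset ℂ) : Pser A * (Pser A)⁻¹ = 1 :=
  PowerSeries.mul_inv_cancel _ (by rw [constCoeff_Pser]; exact one_ne_zero)

noncomputable def hA (A : Finset ℂ) (k : ℤ) : ℂ :=
  if 0 ≤ k then PowerSeries.coeff k.toNat (Pser A)⁻¹ else 0

lemma hA_neg {A : Finset ℂ} {k : ℤ} (h : k < 0) : hA A k = 0 := by
  simp [hA, not_le.2 h]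

lemma hA_zero (A : Finset ℂ) : hA A 0 = 1 := by
  simp only [hA, le_refl, if_pos, Int.toNat_zero]
  rw [PowerSeries.coeff_zero_eq_constantCoeff, PowerSeries.constantCoeff_inv,
    constCoeff_Pser]
  norm_num

lemma inv_Pser_insert {t : ℂ} {A : Finset ℂ} (ht : t ∉ A) :
    (Pser (insert t A))⁻¹ * (1 - PowerSeries.C t * PowerSeries.X) = (Pser A)⁻¹ := by
  have hP : Pser (insert t A) = (1 - PowerSeries.C t * PowerSeries.X) * Pser A :=
    Finset.prod_insert ht
  apply mul_left_cancel₀ (Pser_ne_zero A)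
  calc Pser A * ((Pser (insert t A))⁻¹ * (1 - PowerSeries.C t * PowerSeries.X))
      = Pser (insert t A) * (Pser (insert t A))⁻¹ := by rw [hP]; ring
    _ = 1 := Pser_mul_inv _
    _ = Pser A * (Pser A)⁻¹ := (Pser_mul_inv A).symm

lemma coeff_inv_insert_succ {t : ℂ} {A : Finset ℂ} (ht : t ∉ A) (i : ℕ) :
    PowerSeries.coeff (i+1) (Pser (insert t A))⁻¹
      = t * PowerSeries.coeff i (Pser (insert t A))⁻¹
        + PowerSeries.coeff (i+1) (Pser A)⁻¹ := by
  have h := inv_Pser_insert ht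
  have h2 : (Pser (insert t A))⁻¹ - PowerSeries.C t * ((Pser (insert t A))⁻¹ * PowerSeries.X)
      = (Pser A)⁻¹ := by rw [← h]; ring
  have := congrArg (PowerSeries.coeff (i+1)) h2
  rw [map_sub, PowerSeries.coeff_C_mul, PowerSeries.coeff_succ_mul_X] at this
  linear_combination this

lemma hA_rec {t : ℂ} {A : Finset ℂ} (ht : t ∉ A) (j : ℤ) :
    hA (insert t A) j = t * hA (insert t A) (j - 1) + hA A j := by
  rcases lt_trichotomy j 0 with hj | hj | hj
  · rw [hA_neg hj, hA_neg hj, hA_neg (by omega)]; ring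
  · subst hj
    rw [hA_zero, hA_zero, hA_neg (by norm_num)]; ring
  · obtain ⟨i, rfl⟩ : ∃ i : ℕ, j = (i : ℤ) + 1 := ⟨(j-1).toNat, by omega⟩
    have e1 : ((i : ℤ) + 1).toNat = i + 1 := by omega
    have e2 : ((i : ℤ) + 1 - 1).toNat = i := by omega
    simp only [hA, if_pos (by omega : (0:ℤ) ≤ (i:ℤ)+1), if_pos (by omega : (0:ℤ) ≤ (i:ℤ)+1-1),
      e1, e2]
    exact coeff_inv_insert_succ ht i

noncomputable def SS (A : Finset ℂ) (K : ℕ) : ℂ :=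
  ∑ a ∈ A, a ^ K / ∏ c ∈ A.erase a, (a - c)

lemma SS_rec {t : ℂ} {A : Finset ℂ} (ht : t ∉ A) (K : ℕ) :
    SS (insert t A) (K + 1) = t * SS (insert t A) K + SS A K := by
  have key : SS (insert t A) (K + 1) - t * SS (insert t A) K = SS A K := by
    unfold SS
    rw [Finset.mul_sum, ← Finset.sum_sub_distrib, Finset.sum_insert ht]
    have hterm : (t : ℂ) ^ (K+1) / (∏ c ∈ (insert t A).erase t, (t - c))
        - t * (t ^ K / ∏ c ∈ (insert t A).erase t, (t - c)) = 0 := by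
      rw [pow_succ, mul_comm (t^K) t, mul_div_assoc, sub_self]
    rw [hterm, zero_add]
    apply Finset.sum_congr rfl
    intro a ha
    have hat : a ≠ t := fun h => ht (h ▸ ha)
    have herase : (insert t A).erase a = insert t (A.erase a) := by
      rw [Finset.erase_insert_of_ne hat.symm]
    have hprod : ∏ c ∈ (insert t A).erase a, (a - c)
        = (a - t) * ∏ c ∈ A.erase a, (a - c) := by
      rw [herase, Finset.prod_insert (fun h => ht (Finset.mem_of_mem_erase h))]
    have hD : (∏ c ∈ A.erase a, (a - c)) ≠ 0 :=
      Finset.prod_ne_zero_iff.2 fun c hc => sub_ne_zero.2 (Finset.ne_of_mem_erase hc).symm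
    have hat' : a - t ≠ 0 := sub_ne_zero.2 hat
    rw [hprod]
    field_simp
    ring
  linear_combination key

lemma hA_empty {k : ℤ} (hk : 1 ≤ k) : hA ∅ k = 0 := by
  unfold hA
  rw [if_pos (by omega), show Pser (∅ : Finset ℂ) = 1 from Finset.prod_empty, inv_one,
    PowerSeries.coeff_one, if_neg (by omega)]

lemma SS_zero_vanish : ∀ (M : ℕ) (A : Finset ℂ), A.card = M → 2 ≤ M → SS A 0 = 0 := by
  intro M
  induction M using Nat.strong_induction_on with
  | _ M IH =>
    intro A hcard hM
    rcases eq_or_lt_of_le hM with h2 | h3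
    · -- card = 2
      obtain ⟨t, u, htu, rfl⟩ := Finset.card_eq_two.1 (hcard ▸ h2.symm)
      unfold SS
      rw [Finset.sum_pair htu]
      have e1 : ({t, u} : Finset ℂ).erase t = {u} :=
        Finset.erase_insert (by simp [htu])
      have e2 : ({t, u} : Finset ℂ).erase u = {t} := by
        rw [Finset.pair_comm]
        exact Finset.erase_insert (by simp [htu.symm])
      rw [e1, e2, Finset.prod_singleton, Finset.prod_singleton]
      have h1 : t - u ≠ 0 := sub_ne_zero.2 htu
      have h2' : u - t ≠ 0 := sub_ne_zero.2 htu.symm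
      field_simp
      ring
    · -- card ≥ 3
      obtain ⟨t, ht, u, hu, htu⟩ := Finset.one_lt_card.1 (by omega : 1 < A.card)
      have hrec : ∀ x ∈ A, SS A 1 = x * SS A 0 + SS (A.erase x) 0 := by
        intro x hx
        have h := SS_rec (Finset.notMem_erase x A) 0
        rwa [Finset.insert_erase hx] at h
      have hez : ∀ x ∈ A, SS (A.erase x) 0 = 0 := by
        intro x hx
        exact IH (M - 1) (by omega) _ (by rw [Finset.card_erase_of_mem hx, hcard]) (by omega)
      have h1 := hrec t ht
      have h2 := hrec u hu
      rw [hez t ht] at h1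
      rw [hez u hu] at h2
      have h3' := h1.symm.trans h2
      have : (t - u) * SS A 0 = 0 := by linear_combination h3'
      rcases mul_eq_zero.1 this with h | h
      · exact absurd (sub_eq_zero.1 h) htu
      · exact h

lemma key_lemma : ∀ (K : ℕ) (A : Finset ℂ), SS A K = hA A ((K : ℤ) - A.card + 1) := by
  intro K
  induction K with
  | zero =>
    intro A
    by_cases h0 : A.card = 0
    · rw [Finset.card_eq_zero.1 h0]
      simp only [SS, Finset.sum_empty, Finset.card_empty]
      rw [hA_empty (by norm_num)]
    · by_cases h1 : A.card = 1
      · obtain ⟨t, rfl⟩ := Finset.card_eq_one.1 h1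
        simp only [SS, Finset.sum_singleton, Finset.erase_singleton, Finset.prod_empty,
          Finset.card_singleton]
        norm_num
        exact (hA_zero _).symm
      · have h2 : 2 ≤ A.card := by omega
        rw [SS_zero_vanish A.card A rfl h2, hA_neg (by push_cast; omega)]
  | succ K IH =>
    intro A
    rcases Finset.eq_empty_or_nonempty A with rfl | ⟨t, ht⟩
    · simp only [SS, Finset.sum_empty, Finset.card_empty]
      rw [hA_empty (by push_cast; omega)]
    · have hins : insert t (A.erase t) = A := Finset.insert_erase ht
      have hrec := SS_rec (Finset.notMem_erase t A) K
      rw [hins] at hrec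
      have hcard : (A.erase t).card = A.card - 1 := Finset.card_erase_of_mem ht
      have hpos : 1 ≤ A.card := Finset.card_pos.2 ⟨t, ht⟩
      have harec := hA_rec (Finset.notMem_erase t A) ((K : ℤ) + 1 - A.card + 1)
      rw [hins] at harec
      have e1 : (K : ℤ) + 1 - A.card + 1 - 1 = (K : ℤ) - A.card + 1 := by ring
      have e2 : ((K : ℤ)) - ((A.erase t).card : ℤ) + 1 = (K : ℤ) + 1 - A.card + 1 := by
        rw [hcard]; push_cast [hpos]; omega
      rw [hrec, IH A, IH (A.erase t), e2]
      push_cast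
      rw [harec, e1]

lemma coeff_Pser_insert {t : ℂ} {B : Finset ℂ} (ht : t ∉ B) (j : ℕ) :
    PowerSeries.coeff j (Pser (insert t B))
      = PowerSeries.coeff j (Pser B) - t * PowerSeries.coeff j (Pser B * PowerSeries.X) := by
  have h : Pser (insert t B)
      = Pser B - PowerSeries.C t * (Pser B * PowerSeries.X) := by
    rw [show Pser (insert t B) = (1 - PowerSeries.C t * PowerSeries.X) * Pser B from
      Finset.prod_insert ht]
    ring
  rw [h, map_sub, PowerSeries.coeff_C_mul]

lemma coeff_Pser_zero : ∀ (B : Finset ℂ) (j : ℕ), B.card < j → PowerSeries.coeff j (Pser B) = 0 := by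
  intro B
  induction B using Finset.induction_on with
  | empty =>
    intro j hj
    rw [show Pser (∅ : Finset ℂ) = 1 from Finset.prod_empty, PowerSeries.coeff_one,
      if_neg (by omega)]
  | @insert t B _ IH =>
    intro j hj
    have ht : t ∉ B := by assumption
    rw [Finset.card_insert_of_notMem ht] at hj
    obtain ⟨i, rfl⟩ : ∃ i, j = i + 1 := ⟨j - 1, by omega⟩
    rw [coeff_Pser_insert ht, PowerSeries.coeff_succ_mul_X, IH _ (by omega), IH _ (by omega)]
    ring

lemma expand : ∀ (B : Finset ℂ) (N : ℕ), B.card ≤ N → ∀ a : ℂ,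
    (∏ b ∈ B, (a - b)) * a ^ (N - B.card)
      = ∑ j ∈ Finset.range (N + 1), PowerSeries.coeff j (Pser B) * a ^ (N - j) := by
  intro B
  induction B using Finset.induction_on with
  | empty =>
    intro N _ a
    rw [show Pser (∅ : Finset ℂ) = 1 from Finset.prod_empty]
    simp only [Finset.prod_empty, Finset.card_empty, Nat.sub_zero, one_mul,
      PowerSeries.coeff_one, ite_mul, zero_mul, one_mul]
    rw [Finset.sum_ite_eq' (Finset.range (N + 1)) 0 (fun j => a ^ (N - j)),
      if_pos (Finset.mem_range.2 (by omega)), Nat.sub_zero]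
  | @insert t B ht IH =>
    intro N hN a
    rw [Finset.card_insert_of_notMem ht] at hN ⊢
    obtain ⟨M, rfl⟩ : ∃ M, N = M + 1 := ⟨N - 1, by omega⟩
    have hc : B.card ≤ M := by omega
    have key : ∀ j, PowerSeries.coeff j (Pser (insert t B))
        = PowerSeries.coeff j (Pser B) - t * PowerSeries.coeff j (Pser B * PowerSeries.X) :=
      coeff_Pser_insert ht
    calc (∏ b ∈ insert t B, (a - b)) * a ^ (M + 1 - (B.card + 1))
        = (a - t) * ((∏ b ∈ B, (a - b)) * a ^ (M - B.card)) := by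
          rw [Finset.prod_insert ht, Nat.succ_sub_succ]; ring
      _ = ((∏ b ∈ B, (a - b)) * a ^ (M + 1 - B.card))
          - t * ((∏ b ∈ B, (a - b)) * a ^ (M - B.card)) := by
          rw [show M + 1 - B.card = (M - B.card) + 1 by omega, pow_succ]; ring
      _ = (∑ j ∈ Finset.range (M + 2), PowerSeries.coeff j (Pser B) * a ^ (M + 1 - j))
          - t * ∑ j ∈ Finset.range (M + 1), PowerSeries.coeff j (Pser B) * a ^ (M - j) := by
          rw [IH (M + 1) (by omega) a, IH M hc a]
      _ = ∑ j ∈ Finset.range (M + 2), PowerSeries.coeff j (Pser (insert t B)) * a ^ (M + 1 - j) := by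
          simp only [key, sub_mul, Finset.sum_sub_distrib]
          congr 1
          rw [Finset.mul_sum]
          rw [Finset.sum_range_succ' (fun j => t * PowerSeries.coeff j (Pser B * PowerSeries.X) * a ^ (M + 1 - j)) (M + 1)]
          simp only [PowerSeries.coeff_succ_mul_X, PowerSeries.coeff_zero_mul_X, mul_zero,
            zero_mul, add_zero, Nat.succ_sub_succ]
          apply Finset.sum_congr rfl
          intro i _
          ring

lemma hDiff_expand (A B : Finset ℂ) (k : ℤ) :
    hDiff A B k = ∑ i ∈ Finset.range (B.card + 1),
      PowerSeries.coeff i (Pser B) * hA A (k - i) := by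
  rcases lt_or_ge k 0 with hk | hk
  · rw [hDiff, if_neg (by omega)]
    symm
    apply Finset.sum_eq_zero
    intro i _
    rw [hA_neg (by omega), mul_zero]
  · rw [hDiff, if_pos hk]
    have hd : diffSeries A B = Pser B * (Pser A)⁻¹ := rfl
    rw [hd, PowerSeries.coeff_mul, Finset.Nat.sum_antidiagonal_eq_sum_range_succ_mk]
    have step1 : ∀ i ∈ Finset.range (k.toNat + 1),
        PowerSeries.coeff i (Pser B) * PowerSeries.coeff (k.toNat - i) (Pser A)⁻¹
          = PowerSeries.coeff i (Pser B) * hA A (k - i) := by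
      intro i hi
      have hi' : i ≤ k.toNat := by
        have := Finset.mem_range.1 hi
        omega
      rw [hA, if_pos (by omega), show (k - i).toNat = k.toNat - i by omega]
    rw [Finset.sum_congr rfl step1]
    have h1 : ∑ i ∈ Finset.range (k.toNat + 1),
          PowerSeries.coeff i (Pser B) * hA A (k - i)
        = ∑ i ∈ Finset.range (k.toNat + B.card + 1),
          PowerSeries.coeff i (Pser B) * hA A (k - i) := by
      apply Finset.sum_subset (Finset.range_subset_range.2 (by omega))
      intro i _ hi
      have hki : k.toNat < i := by
        by_contra hcon
        exact hi (Finset.mem_range.2 (by omega))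
      rw [hA_neg (by omega), mul_zero]
    have h2 : ∑ i ∈ Finset.range (B.card + 1),
          PowerSeries.coeff i (Pser B) * hA A (k - i)
        = ∑ i ∈ Finset.range (k.toNat + B.card + 1),
          PowerSeries.coeff i (Pser B) * hA A (k - i) := by
      apply Finset.sum_subset (Finset.range_subset_range.2 (by omega))
      intro i _ hi
      have hbi : B.card < i := by
        by_contra hcon
        exact hi (Finset.mem_range.2 (by omega))
      rw [coeff_Pser_zero B i hbi, zero_mul]
    rw [h1, h2]

theorem stmt_3 (A B : Finset ℂ) (m n : ℕ) (hm : A.card = m) (hn : B.card = n) (r : ℕ) :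
    (∑ a ∈ A, a ^ r * (∏ b ∈ B, (a - b)) / (∏ c ∈ A.erase a, (a - c))) =
      hDiff A B ((n : ℤ) - m + r + 1) := by
  subst hm hn
  rw [hDiff_expand A B]
  have h1 : ∀ a ∈ A, a ^ r * (∏ b ∈ B, (a - b)) / (∏ c ∈ A.erase a, (a - c))
      = ∑ j ∈ Finset.range (B.card + 1),
          PowerSeries.coeff j (Pser B) * (a ^ (r + (B.card - j)) / ∏ c ∈ A.erase a, (a - c)) := by
    intro a _
    have he := expand B B.card le_rfl a
    rw [Nat.sub_self, pow_zero, mul_one] at he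
    rw [he, Finset.mul_sum, Finset.sum_div]
    apply Finset.sum_congr rfl
    intro j _
    rw [pow_add]
    ring
  rw [Finset.sum_congr rfl h1, Finset.sum_comm]
  apply Finset.sum_congr rfl
  intro j hj
  have hj' : j ≤ B.card := by
    have := Finset.mem_range.1 hj
    omega
  rw [show (∑ a ∈ A, PowerSeries.coeff j (Pser B)
        * (a ^ (r + (B.card - j)) / ∏ c ∈ A.erase a, (a - c)))
      = PowerSeries.coeff j (Pser B) * SS A (r + (B.card - j)) by
    rw [SS, Finset.mul_sum]]
  rw [key_lemma]
  congr 1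
  push_cast [Nat.cast_sub hj']
  ring_nf
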